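/- In the one-relator group ⟨x, y | x^k = y^{k+1}⟩, the elements x y x y⁻¹ x⁻¹ y⁻¹ and y^k x y^{-k} x y⁻¹ x⁻¹ are conjugate via y^{-k}; equivalently, in the free group F(x,y), the element (y^{-k})⁻¹ · (x y x y⁻¹ x⁻¹ y⁻¹) · y^{-k} · (y^k x y^{-k} x y⁻¹ x⁻¹)⁻¹ lies in the normal closure of x^k y^{-(k+1)}, for every integer k ≥ 1. -/

import Mathlib

abbrev F₂ : Type := FreeGroup (Fin 2)

noncomputable def x : F₂ := FreeGroup.of 0
noncomputable def y : F₂ := FreeGroup.of 1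

lemma quot_identity {G : Type*} [Group G] (a b : G) (k : ℕ)
    (hrel : a ^ k = b ^ (k + 1)) :
    ((b⁻¹) ^ k)⁻¹ * (a * b * a * b⁻¹ * a⁻¹ * b⁻¹) * (b⁻¹) ^ k *
      (b ^ k * a * (b⁻¹) ^ k * a * b⁻¹ * a⁻¹)⁻¹ = 1 := by
  have hC : Commute (a ^ k) b := by rw [hrel]; exact (Commute.refl b).pow_left _
  rw [mul_inv_eq_one, inv_pow, inv_inv]
  calc b ^ k * (a * b * a * b⁻¹ * a⁻¹ * b⁻¹) * (b ^ k)⁻¹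
      = b ^ k * a * b * a * b⁻¹ * a⁻¹ * (b ^ (k+1))⁻¹ := by group
    _ = b ^ k * a * b * a * b⁻¹ * a⁻¹ * (a ^ k)⁻¹ := by rw [hrel]
    _ = b ^ k * a * b * a * (b⁻¹ * (a ^ k)⁻¹) * a⁻¹ := by group
    _ = b ^ k * a * b * a * ((a ^ k)⁻¹ * b⁻¹) * a⁻¹ := by rw [hC.inv_inv.eq]
    _ = b ^ k * a * (b * (a ^ k)⁻¹) * a * b⁻¹ * a⁻¹ := by group
    _ = b ^ k * a * ((a ^ k)⁻¹ * b) * a * b⁻¹ * a⁻¹ := by rw [hC.inv_left.eq]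
    _ = b ^ k * a * ((b ^ (k+1))⁻¹ * b) * a * b⁻¹ * a⁻¹ := by rw [hrel]
    _ = b ^ k * a * (b ^ k)⁻¹ * a * b⁻¹ * a⁻¹ := by group

theorem stmt_8 (k : ℕ) (hk : 1 ≤ k) :
    ((y⁻¹) ^ k)⁻¹ * (x * y * x * y⁻¹ * x⁻¹ * y⁻¹) * (y⁻¹) ^ k *
        (y ^ k * x * (y⁻¹) ^ k * x * y⁻¹ * x⁻¹)⁻¹ ∈
      Subgroup.normalClosure ({x ^ k * (y⁻¹) ^ (k + 1)} : Set F₂) := by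
  set N := Subgroup.normalClosure ({x ^ k * (y⁻¹) ^ (k + 1)} : Set F₂) with hN
  rw [← QuotientGroup.eq_one_iff]
  let f := QuotientGroup.mk' N
  have hv : f (x ^ k * (y⁻¹) ^ (k + 1)) = 1 := by
    rw [QuotientGroup.mk'_apply, QuotientGroup.eq_one_iff]
    exact Subgroup.subset_normalClosure rfl
  have hrel : (f x) ^ k = (f y) ^ (k + 1) := by
    simp only [map_mul, map_pow, map_inv, inv_pow] at hv
    exact mul_inv_eq_one.mp hv
  have := quot_identity (f x) (f y) k hrel
  simpa only [map_mul, map_pow, map_inv, ← QuotientGroup.mk'_apply] using this
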